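/- Let p_V be the viscous contact potential, λ ≥ 1, and U : X → X* symmetric positive-definite, and define the Yosida-type regularization p_V^{λ,U}(v,w) = inf_{η ∈ X*} { p_V(v,η) + λ‖v‖_U ‖w−η‖_{U^{−1}} }. Then p_V^{λ,U} is a regularized contact potential: it is continuous, finite, positively one-homogeneous in v, convex in w, satisfies max{R(v), ⟨w,v⟩} ≤ p_V^{λ,U}(v,w) ≤ p_V(v,w), and |p_V^{λ,U}(v,w₁) − p_V^{λ,U}(v,w₂)| ≤ L‖v‖‖w₁−w₂‖_* with L = λ√(‖U‖_op ‖U^{−1}‖_op). -/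

import Mathlib

open Classical

open Pointwise

/-- `K* = ∂R(0)`. -/
def Kstar {X : Type*} [NormedAddCommGroup X] [NormedSpace ℝ X]
    (R : X → ℝ) : Set (X →L[ℝ] ℝ) :=
  {w | ∀ z, w z ≤ R z}

/-- The effective domain `K* + (ker V)^⊥` (for symmetric `V` in finite dimension
the annihilator `(ker V)^⊥` is the range of `V`). -/
def pVdom {X : Type*} [NormedAddCommGroup X] [NormedSpace ℝ X]
    (R : X → ℝ) (V : X →L[ℝ] X →L[ℝ] ℝ) : Set (X →L[ℝ] ℝ) :=
  {w | ∃ x : X, w - V x ∈ Kstar R}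

/-- `inf { |w−z|_{V'} : z ∈ K*, w−z ∈ (ker V)^⊥ }`, using `|Vx|_{V'} = ⟨Vx,x⟩^{1/2}`. -/
noncomputable def distVp {X : Type*} [NormedAddCommGroup X] [NormedSpace ℝ X]
    (R : X → ℝ) (V : X →L[ℝ] X →L[ℝ] ℝ) (w : X →L[ℝ] ℝ) : ℝ :=
  sInf {s : ℝ | ∃ x : X, w - V x ∈ Kstar R ∧ s = Real.sqrt (V x x)}

/-- The finite part of the viscous contact potential. -/
noncomputable def pVreal {X : Type*} [NormedAddCommGroup X] [NormedSpace ℝ X]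
    (R : X → ℝ) (V : X →L[ℝ] X →L[ℝ] ℝ) (v : X) (w : X →L[ℝ] ℝ) : ℝ :=
  R v + Real.sqrt (V v v) * distVp R V w

/-- The viscous contact potential (extended-real-valued). -/
noncomputable def pV {X : Type*} [NormedAddCommGroup X] [NormedSpace ℝ X]
    (R : X → ℝ) (V : X →L[ℝ] X →L[ℝ] ℝ) (v : X) (w : X →L[ℝ] ℝ) : EReal :=
  if w ∈ pVdom R V then ((pVreal R V v w : ℝ) : EReal) else ⊤

/-- The Yosida-type regularization
`p_V^{λ,U}(v,w) = inf_η { p_V(v,η) + λ‖v‖_U‖w−η‖_{U⁻¹} }`; the infimum is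
effectively over `η` in the domain of `p_V(v,·)`. -/
noncomputable def yosida {X : Type*} [NormedAddCommGroup X] [NormedSpace ℝ X]
    (R : X → ℝ) (V : X →L[ℝ] X →L[ℝ] ℝ) (U : X ≃L[ℝ] (X →L[ℝ] ℝ))
    (lam : ℝ) (v : X) (w : X →L[ℝ] ℝ) : ℝ :=
  sInf {s : ℝ | ∃ η ∈ pVdom R V,
    s = pVreal R V v η + lam * Real.sqrt (U v v) * Real.sqrt ((w - η) (U.symm (w - η)))}

section YosidaHelpers

/-- Cauchy–Schwarz for an abstract psd quadratic expansion. -/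
lemma yosida_CS_gen {Y : Type*} [AddCommGroup Y] [Module ℝ Y] (B : Y → Y → ℝ)
    (hadd : ∀ x y : Y, ∀ t : ℝ, B (x + t • y) (x + t • y)
      = B x x + 2 * t * B x y + t ^ 2 * B y y)
    (hpsd : ∀ x, 0 ≤ B x x) (x y : Y) :
    B x y ≤ Real.sqrt (B x x) * Real.sqrt (B y y) := by
  have h : ∀ t : ℝ, 0 ≤ B y y * (t * t) + (2 * B x y) * t + B x x := by
    intro t
    have h2 := hpsd (x + t • y)
    rw [hadd x y t] at h2
    nlinarith [h2]
  have hd := discrim_le_zero h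
  rw [discrim] at hd
  have h2 : (B x y) ^ 2 ≤ B x x * B y y := by nlinarith
  calc B x y ≤ |B x y| := le_abs_self _
    _ = Real.sqrt ((B x y) ^ 2) := (Real.sqrt_sq_eq_abs _).symm
    _ ≤ Real.sqrt (B x x * B y y) := Real.sqrt_le_sqrt h2
    _ = _ := Real.sqrt_mul (hpsd x) _

/-- Triangle inequality for the seminorm of a psd form. -/
lemma yosida_tri_gen {Y : Type*} [AddCommGroup Y] [Module ℝ Y] (B : Y → Y → ℝ)
    (hadd : ∀ x y : Y, ∀ t : ℝ, B (x + t • y) (x + t • y)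
      = B x x + 2 * t * B x y + t ^ 2 * B y y)
    (hpsd : ∀ x, 0 ≤ B x x) (x y : Y) :
    Real.sqrt (B (x + y) (x + y)) ≤ Real.sqrt (B x x) + Real.sqrt (B y y) := by
  have hC := yosida_CS_gen B hadd hpsd x y
  have hone := hadd x y 1
  rw [one_smul] at hone
  have hx := Real.sq_sqrt (hpsd x)
  have hy := Real.sq_sqrt (hpsd y)
  have h1 : B (x + y) (x + y) ≤ (Real.sqrt (B x x) + Real.sqrt (B y y)) ^ 2 := by
    nlinarith [Real.sqrt_nonneg (B x x), Real.sqrt_nonneg (B y y)]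
  calc Real.sqrt (B (x + y) (x + y))
      ≤ Real.sqrt ((Real.sqrt (B x x) + Real.sqrt (B y y)) ^ 2) := Real.sqrt_le_sqrt h1
    _ = Real.sqrt (B x x) + Real.sqrt (B y y) := Real.sqrt_sq (by positivity)

lemma yosida_sInf_combo (S₁ S₂ T : Set ℝ) (c₁ c₂ : ℝ) (hc₁ : 0 ≤ c₁) (hc₂ : 0 ≤ c₂)
    (h₁ : S₁.Nonempty) (h₂ : S₂.Nonempty) (hbT : BddBelow T)
    (h : ∀ s₁ ∈ S₁, ∀ s₂ ∈ S₂, ∃ t ∈ T, t ≤ c₁ * s₁ + c₂ * s₂) :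
    sInf T ≤ c₁ * sInf S₁ + c₂ * sInf S₂ := by
  refine le_of_forall_pos_le_add (fun ε hε => ?_)
  have hden : (0:ℝ) < c₁ + c₂ + 1 := by linarith
  have hε' : 0 < ε / (c₁ + c₂ + 1) := by positivity
  obtain ⟨s₁, hs₁, hlt₁⟩ := Real.lt_sInf_add_pos h₁ hε'
  obtain ⟨s₂, hs₂, hlt₂⟩ := Real.lt_sInf_add_pos h₂ hε'
  obtain ⟨t, ht, hle⟩ := h s₁ hs₁ s₂ hs₂
  have h3 := csInf_le hbT ht
  have h4 : (c₁ + c₂) * (ε / (c₁ + c₂ + 1)) ≤ ε := by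
    rw [div_eq_inv_mul]
    have h5 : (c₁ + c₂) * ((c₁ + c₂ + 1)⁻¹ * ε) = ((c₁ + c₂) / (c₁ + c₂ + 1)) * ε := by ring
    rw [h5]
    have hq : (c₁ + c₂) / (c₁ + c₂ + 1) ≤ 1 := by
      rw [div_le_one hden]; linarith
    nlinarith
  nlinarith [mul_le_mul_of_nonneg_left hlt₁.le hc₁, mul_le_mul_of_nonneg_left hlt₂.le hc₂]

lemma yosida_sInf_le_sInf_add (S₁ S₂ : Set ℝ) (c : ℝ) (h₂ : S₂.Nonempty) (hb₁ : BddBelow S₁)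
    (h : ∀ s ∈ S₂, ∃ t ∈ S₁, t ≤ s + c) : sInf S₁ ≤ sInf S₂ + c := by
  have key : ∀ s ∈ S₂, sInf S₁ - c ≤ s := by
    intro s hs
    obtain ⟨t, ht, hle⟩ := h s hs
    have := csInf_le hb₁ ht
    linarith
  have := le_csInf h₂ key
  linarith

/-- The defining set of the Yosida regularization. -/
def ySet {X : Type*} [NormedAddCommGroup X] [NormedSpace ℝ X]
    (R : X → ℝ) (V : X →L[ℝ] X →L[ℝ] ℝ) (U : X ≃L[ℝ] (X →L[ℝ] ℝ))
    (lam : ℝ) (v : X) (w : X →L[ℝ] ℝ) : Set ℝ :=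
  {s : ℝ | ∃ η ∈ pVdom R V,
    s = pVreal R V v η + lam * Real.sqrt (U v v) * Real.sqrt ((w - η) (U.symm (w - η)))}

lemma yosida_eq_sInf {X : Type*} [NormedAddCommGroup X] [NormedSpace ℝ X]
    (R : X → ℝ) (V : X →L[ℝ] X →L[ℝ] ℝ) (U : X ≃L[ℝ] (X →L[ℝ] ℝ))
    (lam : ℝ) (v : X) (w : X →L[ℝ] ℝ) :
    yosida R V U lam v w = sInf (ySet R V U lam v w) := rfl

/-- The defining set of `distVp`. -/
def dSet {X : Type*} [NormedAddCommGroup X] [NormedSpace ℝ X]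
    (R : X → ℝ) (V : X →L[ℝ] X →L[ℝ] ℝ) (w : X →L[ℝ] ℝ) : Set ℝ :=
  {s : ℝ | ∃ x : X, w - V x ∈ Kstar R ∧ s = Real.sqrt (V x x)}

lemma distVp_eq_sInf {X : Type*} [NormedAddCommGroup X] [NormedSpace ℝ X]
    (R : X → ℝ) (V : X →L[ℝ] X →L[ℝ] ℝ) (w : X →L[ℝ] ℝ) :
    distVp R V w = sInf (dSet R V w) := rfl

end YosidaHelpers

set_option maxHeartbeats 1000000 in
/-- Proposition 3.4: for `λ ≥ 1` and `U` symmetric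
positive-definite, the Yosida-type regularization `p_V^{λ,U}` is a regularized
contact potential: continuous (and finite), positively one-homogeneous in `v`,
convex in `w`, squeezed between `max{R(v),⟨w,v⟩}` and `p_V(v,w)`, and Lipschitz
in `w` with constant `L‖v‖`, `L = λ√(‖U‖_op‖U⁻¹‖_op)`. -/
theorem yosida_is_RCP {X : Type*} [NormedAddCommGroup X] [NormedSpace ℝ X]
    [FiniteDimensional ℝ X] (R : X → ℝ)
    (hRnonneg : ∀ v, 0 ≤ R v)
    (hRcoer : ∃ α > 0, ∀ v, α * ‖v‖ ≤ R v)
    (hRconv : ConvexOn ℝ Set.univ R)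
    (hRhom : ∀ c : ℝ, 0 ≤ c → ∀ v, R (c • v) = c * R v)
    (V : X →L[ℝ] X →L[ℝ] ℝ)
    (hVsym : ∀ x y, V x y = V y x)
    (hVpsd : ∀ x, 0 ≤ V x x)
    (U : X ≃L[ℝ] (X →L[ℝ] ℝ))
    (hUsym : ∀ x y, U x y = U y x)
    (hUpos : ∀ x : X, x ≠ 0 → 0 < U x x)
    (lam : ℝ) (hlam : 1 ≤ lam) :
    Continuous (fun q : X × (X →L[ℝ] ℝ) => yosida R V U lam q.1 q.2)
    ∧ (∀ c : ℝ, 0 ≤ c → ∀ (v : X) (w : X →L[ℝ] ℝ),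
        yosida R V U lam (c • v) w = c * yosida R V U lam v w)
    ∧ (∀ (v : X) (w₁ w₂ : X →L[ℝ] ℝ) (θ : ℝ), 0 ≤ θ → θ ≤ 1 →
        yosida R V U lam v (θ • w₁ + (1 - θ) • w₂) ≤
          θ * yosida R V U lam v w₁ + (1 - θ) * yosida R V U lam v w₂)
    ∧ (∀ (v : X) (w : X →L[ℝ] ℝ), max (R v) (w v) ≤ yosida R V U lam v w)
    ∧ (∀ (v : X) (w : X →L[ℝ] ℝ), ((yosida R V U lam v w : ℝ) : EReal) ≤ pV R V v w)
    ∧ (∀ (v : X) (w₁ w₂ : X →L[ℝ] ℝ),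
        |yosida R V U lam v w₁ - yosida R V U lam v w₂| ≤
          lam * Real.sqrt (‖U.toContinuousLinearMap‖ * ‖U.symm.toContinuousLinearMap‖)
            * ‖v‖ * ‖w₁ - w₂‖) := by
  have lam0 : (0:ℝ) ≤ lam := le_trans zero_le_one hlam
  -- positivity facts for the forms
  have hUnn : ∀ x : X, 0 ≤ U x x := by
    intro x
    by_cases hx : x = 0
    · simp [hx]
    · exact (hUpos x hx).le
  have hU'sym : ∀ a b : X →L[ℝ] ℝ, a (U.symm b) = b (U.symm a) := by
    intro a b
    have h := hUsym (U.symm a) (U.symm b)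
    rwa [U.apply_symm_apply, U.apply_symm_apply] at h
  have hU'nn : ∀ u : X →L[ℝ] ℝ, 0 ≤ u (U.symm u) := by
    intro u
    have h := hUnn (U.symm u)
    rwa [U.apply_symm_apply] at h
  have hVexp : ∀ x y : X, ∀ t : ℝ, V (x + t • y) (x + t • y)
      = V x x + 2 * t * V x y + t ^ 2 * V y y := by
    intro x y t
    simp only [map_add, map_smul, ContinuousLinearMap.add_apply,
      ContinuousLinearMap.smul_apply, smul_eq_mul]
    linear_combination t * hVsym y x
  have hU'exp : ∀ a b : X →L[ℝ] ℝ, ∀ t : ℝ,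
      (a + t • b) (U.symm (a + t • b))
        = a (U.symm a) + 2 * t * (a (U.symm b)) + t ^ 2 * (b (U.symm b)) := by
    intro a b t
    simp only [map_add, map_smul, ContinuousLinearMap.add_apply,
      ContinuousLinearMap.smul_apply, smul_eq_mul]
    linear_combination t * hU'sym b a
  have hVcs := yosida_CS_gen (fun x y : X => V x y) hVexp hVpsd
  have hVtri := yosida_tri_gen (fun x y : X => V x y) hVexp hVpsd
  have hU'cs := yosida_CS_gen (fun a b : X →L[ℝ] ℝ => a (U.symm b)) hU'exp hU'nn
  have hU'tri := yosida_tri_gen (fun a b : X →L[ℝ] ℝ => a (U.symm b)) hU'exp hU'nn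
  -- scaling facts
  have hVsq : ∀ (c : ℝ) (x : X), 0 ≤ c →
      Real.sqrt (V (c • x) (c • x)) = c * Real.sqrt (V x x) := by
    intro c x hc
    have h : V (c • x) (c • x) = c ^ 2 * V x x := by
      simp only [map_smul, ContinuousLinearMap.smul_apply, smul_eq_mul]; ring
    rw [h, Real.sqrt_mul (sq_nonneg c), Real.sqrt_sq hc]
  have hUsq : ∀ (c : ℝ) (x : X), 0 ≤ c →
      Real.sqrt (U (c • x) (c • x)) = c * Real.sqrt (U x x) := by
    intro c x hc
    have h : U (c • x) (c • x) = c ^ 2 * U x x := by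
      simp only [map_smul, ContinuousLinearMap.smul_apply, smul_eq_mul]; ring
    rw [h, Real.sqrt_mul (sq_nonneg c), Real.sqrt_sq hc]
  have hNsq : ∀ (c : ℝ) (u : X →L[ℝ] ℝ), 0 ≤ c →
      Real.sqrt ((c • u) (U.symm (c • u))) = c * Real.sqrt (u (U.symm u)) := by
    intro c u hc
    have h : (c • u) (U.symm (c • u)) = c ^ 2 * (u (U.symm u)) := by
      simp only [map_smul, ContinuousLinearMap.smul_apply, smul_eq_mul]; ring
    rw [h, Real.sqrt_mul (sq_nonneg c), Real.sqrt_sq hc]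
  -- domain and distance facts
  have hKzero : (0 : X →L[ℝ] ℝ) ∈ Kstar R := by
    intro z; simpa using hRnonneg z
  have h0dom : (0 : X →L[ℝ] ℝ) ∈ pVdom R V := by
    refine ⟨0, ?_⟩
    simpa using hKzero
  have hdist_bdd : ∀ w : X →L[ℝ] ℝ, BddBelow (dSet R V w) := by
    intro w
    refine ⟨0, fun s hs => ?_⟩
    obtain ⟨x, -, rfl⟩ := hs
    exact Real.sqrt_nonneg _
  have hdist_nn : ∀ w : X →L[ℝ] ℝ, 0 ≤ distVp R V w := by
    intro w
    apply Real.sInf_nonneg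
    rintro s ⟨x, -, rfl⟩
    exact Real.sqrt_nonneg _
  have hdist_zero : distVp R V (0 : X →L[ℝ] ℝ) = 0 := by
    apply le_antisymm
    · rw [distVp_eq_sInf]
      have hmem : (0:ℝ) ∈ dSet R V (0 : X →L[ℝ] ℝ) := by
        refine ⟨0, by simpa using hKzero, by simp⟩
      exact csInf_le (hdist_bdd 0) hmem
    · exact hdist_nn 0
  -- duality: η v ≤ pVreal v η on the domain
  have hdual : ∀ (v : X) (η : X →L[ℝ] ℝ), η ∈ pVdom R V → η v ≤ pVreal R V v η := by
    intro v η hη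
    obtain ⟨x₀, hx₀⟩ := hη
    have hkey : ∀ x : X, η - V x ∈ Kstar R →
        η v - R v ≤ Real.sqrt (V v v) * Real.sqrt (V x x) := by
      intro x hx
      have h1 : (η - V x) v ≤ R v := hx v
      have h2 : V x v ≤ Real.sqrt (V x x) * Real.sqrt (V v v) := hVcs x v
      have h3 : (η - V x) v = η v - V x v := by
        simp [ContinuousLinearMap.sub_apply]
      nlinarith [h1, h2]
    rcases eq_or_lt_of_le (Real.sqrt_nonneg (V v v)) with hz | hz
    · have h4 := hkey x₀ hx₀
      rw [pVreal, ← hz]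
      rw [← hz] at h4
      nlinarith [h4, hdist_nn η]
    · have hlb : (η v - R v) / Real.sqrt (V v v) ≤ distVp R V η := by
        rw [distVp_eq_sInf]
        refine le_csInf ⟨Real.sqrt (V x₀ x₀), ⟨x₀, hx₀, rfl⟩⟩ ?_
        rintro s ⟨x, hx, rfl⟩
        rw [div_le_iff₀ hz]
        nlinarith [hkey x hx]
      have h4 := (div_le_iff₀ hz).1 hlb
      rw [pVreal]
      nlinarith [h4]
  -- Cauchy–Schwarz for the dual pairing
  have hpair : ∀ (v : X) (u : X →L[ℝ] ℝ),
      u v ≤ Real.sqrt (u (U.symm u)) * Real.sqrt (U v v) := by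
    intro v u
    have h := hU'cs u (U v)
    simp only [U.symm_apply_apply] at h
    exact h
  -- elementwise lower bound
  have helem_ge : ∀ (v : X) (w : X →L[ℝ] ℝ), ∀ s ∈ ySet R V U lam v w,
      max (R v) (w v) ≤ s := by
    rintro v w s ⟨η, hη, rfl⟩
    have hd := hdist_nn η
    have hsV := Real.sqrt_nonneg (V v v)
    have hsU := Real.sqrt_nonneg (U v v)
    have hN := Real.sqrt_nonneg ((w - η) (U.symm (w - η)))
    have h1 : R v ≤ pVreal R V v η := by
      rw [pVreal]; nlinarith
    have h2 : η v ≤ pVreal R V v η := hdual v η hη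
    have h3 : (w - η) v ≤ Real.sqrt ((w - η) (U.symm (w - η))) * Real.sqrt (U v v) :=
      hpair v (w - η)
    have h4 : (w - η) v = w v - η v := by
      simp [ContinuousLinearMap.sub_apply]
    apply max_le
    · nlinarith [mul_nonneg (mul_nonneg lam0 hsU) hN]
    · nlinarith [mul_nonneg hsU hN, hlam]
  have hSne : ∀ (v : X) (w : X →L[ℝ] ℝ), (ySet R V U lam v w).Nonempty :=
    fun v w => ⟨_, 0, h0dom, rfl⟩
  have hSbdd : ∀ (v : X) (w : X →L[ℝ] ℝ), BddBelow (ySet R V U lam v w) := by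
    intro v w
    refine ⟨0, fun s hs => ?_⟩
    exact le_trans (le_trans (hRnonneg v) (le_max_left _ _)) (helem_ge v w s hs)
  have hyle : ∀ (v : X) (w η : X →L[ℝ] ℝ), η ∈ pVdom R V →
      yosida R V U lam v w ≤ pVreal R V v η
        + lam * Real.sqrt (U v v) * Real.sqrt ((w - η) (U.symm (w - η))) := by
    intro v w η hη
    rw [yosida_eq_sInf]
    exact csInf_le (hSbdd v w) ⟨η, hη, rfl⟩
  have hyge : ∀ (v : X) (w : X →L[ℝ] ℝ), max (R v) (w v) ≤ yosida R V U lam v w := by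
    intro v w
    rw [yosida_eq_sInf]
    exact le_csInf (hSne v w) (fun s hs => helem_ge v w s hs)
  -- homogeneity in v
  have hhom : ∀ c : ℝ, 0 ≤ c → ∀ (v : X) (w : X →L[ℝ] ℝ),
      yosida R V U lam (c • v) w = c * yosida R V U lam v w := by
    intro c hc v w
    have hset : ySet R V U lam (c • v) w = (fun s => c * s) '' ySet R V U lam v w := by
      ext s
      constructor
      · rintro ⟨η, hη, rfl⟩
        refine ⟨pVreal R V v η + lam * Real.sqrt (U v v)
          * Real.sqrt ((w - η) (U.symm (w - η))), ⟨η, hη, rfl⟩, ?_⟩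
        simp only [pVreal, hRhom c hc, hVsq c v hc, hUsq c v hc]
        ring
      · rintro ⟨s', ⟨η, hη, rfl⟩, rfl⟩
        refine ⟨η, hη, ?_⟩
        simp only [pVreal, hRhom c hc, hVsq c v hc, hUsq c v hc]
        ring
    rw [yosida_eq_sInf, yosida_eq_sInf, hset]
    have himg : (fun s : ℝ => c * s) '' ySet R V U lam v w = c • ySet R V U lam v w := by
      ext t
      simp [Set.mem_smul_set, smul_eq_mul, eq_comm]
    rw [himg, Real.sInf_smul_of_nonneg hc, smul_eq_mul]
  -- convexity in w
  have hconv : ∀ (v : X) (w₁ w₂ : X →L[ℝ] ℝ) (θ : ℝ), 0 ≤ θ → θ ≤ 1 →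
      yosida R V U lam v (θ • w₁ + (1 - θ) • w₂) ≤
        θ * yosida R V U lam v w₁ + (1 - θ) * yosida R V U lam v w₂ := by
    intro v w₁ w₂ θ hθ0 hθ1
    have hθ1' : (0:ℝ) ≤ 1 - θ := by linarith
    rw [yosida_eq_sInf, yosida_eq_sInf, yosida_eq_sInf]
    apply yosida_sInf_combo _ _ _ θ (1 - θ) hθ0 hθ1' (hSne v w₁) (hSne v w₂) (hSbdd v _)
    rintro s₁ ⟨η₁, hη₁, rfl⟩ s₂ ⟨η₂, hη₂, rfl⟩
    obtain ⟨x₁, hx₁⟩ := hη₁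
    obtain ⟨x₂, hx₂⟩ := hη₂
    have hKcomb : ∀ (A B : X →L[ℝ] ℝ), A ∈ Kstar R → B ∈ Kstar R →
        θ • A + (1 - θ) • B ∈ Kstar R := by
      intro A B hA hB z
      have e : (θ • A + (1 - θ) • B) z = θ * A z + (1 - θ) * B z := by
        simp [ContinuousLinearMap.add_apply, ContinuousLinearMap.smul_apply, smul_eq_mul]
      rw [e]
      nlinarith [mul_le_mul_of_nonneg_left (hA z) hθ0, mul_le_mul_of_nonneg_left (hB z) hθ1']
    have hηdom : (θ • η₁ + (1 - θ) • η₂ : X →L[ℝ] ℝ) ∈ pVdom R V := by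
      refine ⟨θ • x₁ + (1 - θ) • x₂, ?_⟩
      have e : (θ • η₁ + (1 - θ) • η₂ : X →L[ℝ] ℝ) - V (θ • x₁ + (1 - θ) • x₂)
          = θ • (η₁ - V x₁) + (1 - θ) • (η₂ - V x₂) := by
        rw [map_add, map_smul, map_smul]
        module
      rw [e]
      exact hKcomb _ _ hx₁ hx₂
    have hdconv : distVp R V (θ • η₁ + (1 - θ) • η₂)
        ≤ θ * distVp R V η₁ + (1 - θ) * distVp R V η₂ := by
      rw [distVp_eq_sInf, distVp_eq_sInf, distVp_eq_sInf]
      apply yosida_sInf_combo (dSet R V η₁) (dSet R V η₂)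
        (dSet R V (θ • η₁ + (1 - θ) • η₂)) θ (1 - θ) hθ0 hθ1'
        ⟨Real.sqrt (V x₁ x₁), ⟨x₁, hx₁, rfl⟩⟩ ⟨Real.sqrt (V x₂ x₂), ⟨x₂, hx₂, rfl⟩⟩
        (hdist_bdd _)
      rintro t₁ ⟨y₁, hy₁, rfl⟩ t₂ ⟨y₂, hy₂, rfl⟩
      refine ⟨Real.sqrt (V (θ • y₁ + (1 - θ) • y₂) (θ • y₁ + (1 - θ) • y₂)),
        ⟨θ • y₁ + (1 - θ) • y₂, ?_, rfl⟩, ?_⟩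
      · have e : (θ • η₁ + (1 - θ) • η₂ : X →L[ℝ] ℝ) - V (θ • y₁ + (1 - θ) • y₂)
            = θ • (η₁ - V y₁) + (1 - θ) • (η₂ - V y₂) := by
          rw [map_add, map_smul, map_smul]
          module
        rw [e]
        exact hKcomb _ _ hy₁ hy₂
      · have ht := hVtri (θ • y₁) ((1 - θ) • y₂)
        rw [hVsq θ y₁ hθ0, hVsq (1 - θ) y₂ hθ1'] at ht
        exact ht
    have e3 : (θ • w₁ + (1 - θ) • w₂) - (θ • η₁ + (1 - θ) • η₂)
        = θ • (w₁ - η₁) + (1 - θ) • (w₂ - η₂) := by module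
    have hNt : Real.sqrt ((θ • (w₁ - η₁) + (1 - θ) • (w₂ - η₂))
          (U.symm (θ • (w₁ - η₁) + (1 - θ) • (w₂ - η₂))))
        ≤ θ * Real.sqrt ((w₁ - η₁) (U.symm (w₁ - η₁)))
          + (1 - θ) * Real.sqrt ((w₂ - η₂) (U.symm (w₂ - η₂))) := by
      have ht := hU'tri (θ • (w₁ - η₁)) ((1 - θ) • (w₂ - η₂))
      rw [hNsq θ _ hθ0, hNsq (1 - θ) _ hθ1'] at ht
      exact ht
    refine ⟨_, ⟨θ • η₁ + (1 - θ) • η₂, hηdom, rfl⟩, ?_⟩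
    rw [e3]
    simp only [pVreal]
    have m1 := mul_le_mul_of_nonneg_left hdconv (Real.sqrt_nonneg (V v v))
    have m2 := mul_le_mul_of_nonneg_left hNt
      (mul_nonneg lam0 (Real.sqrt_nonneg (U v v)))
    nlinarith [m1, m2]
  -- upper bound by pV
  have hup : ∀ (v : X) (w : X →L[ℝ] ℝ),
      ((yosida R V U lam v w : ℝ) : EReal) ≤ pV R V v w := by
    intro v w
    by_cases hw : w ∈ pVdom R V
    · rw [pV, if_pos hw]
      have h := hyle v w w hw
      rw [sub_self] at h
      simp only [map_zero, ContinuousLinearMap.zero_apply, Real.sqrt_zero, mul_zero,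
        add_zero] at h
      exact EReal.coe_le_coe_iff.2 h
    · rw [pV, if_neg hw]
      exact le_top
  -- norm bounds
  have hNbound : ∀ u : X →L[ℝ] ℝ, Real.sqrt (u (U.symm u))
      ≤ Real.sqrt ‖U.symm.toContinuousLinearMap‖ * ‖u‖ := by
    intro u
    have h1 : u (U.symm u) ≤ ‖U.symm.toContinuousLinearMap‖ * ‖u‖ ^ 2 := by
      have h2 : u (U.symm u) ≤ ‖u‖ * ‖U.symm u‖ := by
        calc u (U.symm u) ≤ |u (U.symm u)| := le_abs_self _
          _ = ‖u (U.symm u)‖ := (Real.norm_eq_abs _).symm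
          _ ≤ ‖u‖ * ‖U.symm u‖ := u.le_opNorm _
      have h3 : ‖U.symm u‖ ≤ ‖U.symm.toContinuousLinearMap‖ * ‖u‖ := by
        have := U.symm.toContinuousLinearMap.le_opNorm u
        simpa using this
      nlinarith [norm_nonneg u, norm_nonneg (U.symm u)]
    have h3 := Real.sqrt_le_sqrt h1
    rwa [Real.sqrt_mul (norm_nonneg U.symm.toContinuousLinearMap) (‖u‖ ^ 2),
      Real.sqrt_sq (norm_nonneg u)] at h3
  have hUbound : ∀ v : X, Real.sqrt (U v v)
      ≤ Real.sqrt ‖U.toContinuousLinearMap‖ * ‖v‖ := by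
    intro v
    have h1 : U v v ≤ ‖U.toContinuousLinearMap‖ * ‖v‖ ^ 2 := by
      have h2 : U v v ≤ ‖U v‖ * ‖v‖ := by
        calc U v v ≤ |U v v| := le_abs_self _
          _ = ‖U v v‖ := (Real.norm_eq_abs _).symm
          _ ≤ ‖U v‖ * ‖v‖ := (U v).le_opNorm _
      have h3 : ‖U v‖ ≤ ‖U.toContinuousLinearMap‖ * ‖v‖ := by
        have := U.toContinuousLinearMap.le_opNorm v
        simpa using this
      nlinarith [norm_nonneg v, norm_nonneg (U v)]
    have h3 := Real.sqrt_le_sqrt h1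
    rwa [Real.sqrt_mul (norm_nonneg U.toContinuousLinearMap) (‖v‖ ^ 2),
      Real.sqrt_sq (norm_nonneg v)] at h3
  have hL : ∀ (v : X) (u : X →L[ℝ] ℝ),
      lam * Real.sqrt (U v v) * Real.sqrt (u (U.symm u))
        ≤ lam * Real.sqrt (‖U.toContinuousLinearMap‖ * ‖U.symm.toContinuousLinearMap‖)
            * ‖v‖ * ‖u‖ := by
    intro v u
    rw [Real.sqrt_mul (norm_nonneg U.toContinuousLinearMap) ‖U.symm.toContinuousLinearMap‖]
    have h1 := hUbound v
    have h2 := hNbound u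
    have h3 := mul_le_mul h1 h2 (Real.sqrt_nonneg _) (by positivity)
    nlinarith [mul_le_mul_of_nonneg_left h3 lam0]
  -- Lipschitz estimate
  have honeside : ∀ (v : X) (w₁ w₂ : X →L[ℝ] ℝ),
      yosida R V U lam v w₁ ≤ yosida R V U lam v w₂
        + lam * Real.sqrt (‖U.toContinuousLinearMap‖ * ‖U.symm.toContinuousLinearMap‖)
            * ‖v‖ * ‖w₁ - w₂‖ := by
    intro v w₁ w₂
    rw [yosida_eq_sInf, yosida_eq_sInf]
    apply yosida_sInf_le_sInf_add _ _ _ (hSne v w₂) (hSbdd v w₁)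
    rintro s ⟨η, hη, rfl⟩
    refine ⟨_, ⟨η, hη, rfl⟩, ?_⟩
    have e : w₁ - η = (w₂ - η) + (w₁ - w₂) := by abel
    have ht := hU'tri (w₂ - η) (w₁ - w₂)
    rw [← e] at ht
    have hb := hL v (w₁ - w₂)
    have hm := mul_le_mul_of_nonneg_left ht (mul_nonneg lam0 (Real.sqrt_nonneg (U v v)))
    nlinarith [hm, hb]
  have hlip : ∀ (v : X) (w₁ w₂ : X →L[ℝ] ℝ),
      |yosida R V U lam v w₁ - yosida R V U lam v w₂| ≤
        lam * Real.sqrt (‖U.toContinuousLinearMap‖ * ‖U.symm.toContinuousLinearMap‖)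
          * ‖v‖ * ‖w₁ - w₂‖ := by
    intro v w₁ w₂
    rw [abs_sub_le_iff]
    constructor
    · have := honeside v w₁ w₂
      linarith
    · have h := honeside v w₂ w₁
      rw [norm_sub_rev w₂ w₁] at h
      linarith
  -- continuity
  have hRcont : Continuous R := by
    rw [← continuousOn_univ]
    exact hRconv.continuousOn isOpen_univ
  have hacont : Continuous fun v : X => Real.sqrt (V v v) :=
    Real.continuous_sqrt.comp (V.continuous.clm_apply continuous_id)
  have hucont : Continuous fun v : X => Real.sqrt (U v v) :=
    Real.continuous_sqrt.comp (U.continuous.clm_apply continuous_id)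
  have hNcont : Continuous fun u : X →L[ℝ] ℝ => Real.sqrt (u (U.symm u)) :=
    Real.continuous_sqrt.comp (continuous_id.clm_apply U.symm.continuous)
  have hcont : Continuous (fun q : X × (X →L[ℝ] ℝ) => yosida R V U lam q.1 q.2) := by
    rw [continuous_iff_continuousAt]
    rintro ⟨v₀, w₀⟩
    have hlow : ∀ y < yosida R V U lam v₀ w₀,
        ∀ᶠ p : X × (X →L[ℝ] ℝ) in nhds (v₀, w₀), y < yosida R V U lam p.1 p.2 := by
      intro y hy
      have hg₀nn : 0 ≤ yosida R V U lam v₀ w₀ - R v₀ := by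
        have h := hyge v₀ w₀
        have h2 := le_max_left (R v₀) (w₀ v₀)
        linarith [le_trans h2 h]
      set L := lam * Real.sqrt (‖U.toContinuousLinearMap‖ * ‖U.symm.toContinuousLinearMap‖)
        with hLdef
      set g₀ := yosida R V U lam v₀ w₀ - R v₀ with hg₀def
      set r : X → ℝ := fun v => min (min
        (if Real.sqrt (V v₀ v₀) = 0 then 1 else Real.sqrt (V v v) / Real.sqrt (V v₀ v₀))
        (if Real.sqrt (U v₀ v₀) = 0 then 1 else Real.sqrt (U v v) / Real.sqrt (U v₀ v₀))) 1
        with hrdef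
      have hrnn : ∀ v : X, 0 ≤ r v := by
        intro v
        simp only [hrdef]
        refine le_min (le_min ?_ ?_) zero_le_one
        · split_ifs with h
          · exact zero_le_one
          · exact div_nonneg (Real.sqrt_nonneg _) (Real.sqrt_nonneg _)
        · split_ifs with h
          · exact zero_le_one
          · exact div_nonneg (Real.sqrt_nonneg _) (Real.sqrt_nonneg _)
      have hra : ∀ v : X, r v * Real.sqrt (V v₀ v₀) ≤ Real.sqrt (V v v) := by
        intro v
        by_cases h : Real.sqrt (V v₀ v₀) = 0
        · rw [h, mul_zero]; exact Real.sqrt_nonneg _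
        · have hpos : 0 < Real.sqrt (V v₀ v₀) :=
            lt_of_le_of_ne (Real.sqrt_nonneg _) (Ne.symm h)
          have h1 : r v ≤ Real.sqrt (V v v) / Real.sqrt (V v₀ v₀) := by
            simp only [hrdef]
            exact le_trans (le_trans (min_le_left _ _) (min_le_left _ _))
              (le_of_eq (if_neg h))
          calc r v * Real.sqrt (V v₀ v₀)
              ≤ (Real.sqrt (V v v) / Real.sqrt (V v₀ v₀)) * Real.sqrt (V v₀ v₀) :=
                mul_le_mul_of_nonneg_right h1 hpos.le
            _ = Real.sqrt (V v v) := div_mul_cancel₀ _ (ne_of_gt hpos)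
      have hrb : ∀ v : X, r v * Real.sqrt (U v₀ v₀) ≤ Real.sqrt (U v v) := by
        intro v
        by_cases h : Real.sqrt (U v₀ v₀) = 0
        · rw [h, mul_zero]; exact Real.sqrt_nonneg _
        · have hpos : 0 < Real.sqrt (U v₀ v₀) :=
            lt_of_le_of_ne (Real.sqrt_nonneg _) (Ne.symm h)
          have h1 : r v ≤ Real.sqrt (U v v) / Real.sqrt (U v₀ v₀) := by
            simp only [hrdef]
            exact le_trans (le_trans (min_le_left _ _) (min_le_right _ _))
              (le_of_eq (if_neg h))
          calc r v * Real.sqrt (U v₀ v₀)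
              ≤ (Real.sqrt (U v v) / Real.sqrt (U v₀ v₀)) * Real.sqrt (U v₀ v₀) :=
                mul_le_mul_of_nonneg_right h1 hpos.le
            _ = Real.sqrt (U v v) := div_mul_cancel₀ _ (ne_of_gt hpos)
      have hr₀ : r v₀ = 1 := by
        simp only [hrdef]
        have e1 : (if Real.sqrt (V v₀ v₀) = 0 then (1:ℝ)
            else Real.sqrt (V v₀ v₀) / Real.sqrt (V v₀ v₀)) = 1 := by
          split_ifs with h
          · rfl
          · exact div_self h
        have e2 : (if Real.sqrt (U v₀ v₀) = 0 then (1:ℝ)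
            else Real.sqrt (U v₀ v₀) / Real.sqrt (U v₀ v₀)) = 1 := by
          split_ifs with h
          · rfl
          · exact div_self h
        rw [e1, e2]
        simp
      have hrcont : Continuous r := by
        simp only [hrdef]
        refine Continuous.min (Continuous.min ?_ ?_) continuous_const
        · split_ifs with h
          · exact continuous_const
          · exact hacont.div_const _
        · split_ifs with h
          · exact continuous_const
          · exact hucont.div_const _
      have hymid : ∀ v : X, R v + r v * g₀ ≤ yosida R V U lam v w₀ := by
        intro v
        rw [yosida_eq_sInf]
        apply le_csInf (hSne v w₀)
        rintro s ⟨η, hη, rfl⟩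
        have h1 := hyle v₀ w₀ η hη
        have h2 : g₀ ≤ Real.sqrt (V v₀ v₀) * distVp R V η
            + lam * Real.sqrt (U v₀ v₀) * Real.sqrt ((w₀ - η) (U.symm (w₀ - η))) := by
          rw [hg₀def]
          simp only [pVreal] at h1
          linarith
        have h3 := mul_le_mul_of_nonneg_left h2 (hrnn v)
        have h4 := mul_le_mul_of_nonneg_right (hra v) (hdist_nn η)
        have h5 := mul_le_mul_of_nonneg_right (mul_le_mul_of_nonneg_right (hrb v)
          (Real.sqrt_nonneg ((w₀ - η) (U.symm (w₀ - η))))) lam0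
        simp only [pVreal]
        nlinarith [h3, h4, h5]
      have hkey : ∀ p : X × (X →L[ℝ] ℝ),
          R p.1 + r p.1 * g₀ - L * ‖p.1‖ * ‖p.2 - w₀‖ ≤ yosida R V U lam p.1 p.2 := by
        rintro ⟨v, w⟩
        have h1 := hymid v
        have h2 := hlip v w w₀
        have h3 := (abs_le.1 h2).1
        simp only at h1 h3 ⊢
        linarith
      have hbarcont : Continuous fun p : X × (X →L[ℝ] ℝ) =>
          R p.1 + r p.1 * g₀ - L * ‖p.1‖ * ‖p.2 - w₀‖ := by
        refine Continuous.sub (Continuous.add (hRcont.comp continuous_fst)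
          ((hrcont.comp continuous_fst).mul continuous_const)) ?_
        exact (continuous_const.mul continuous_fst.norm).mul
          ((continuous_snd.sub continuous_const).norm)
      have hval : y < R v₀ + r v₀ * g₀ - L * ‖v₀‖ * ‖w₀ - w₀‖ := by
        rw [hr₀, hg₀def]
        simp only [sub_self, norm_zero, mul_zero, sub_zero, one_mul]
        linarith
      have hev := (tendsto_order.1 (hbarcont.continuousAt (x := (v₀, w₀)))).1 y hval
      filter_upwards [hev] with p hp
      exact lt_of_lt_of_le hp (hkey p)
    have hhigh : ∀ y, yosida R V U lam v₀ w₀ < y →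
        ∀ᶠ p : X × (X →L[ℝ] ℝ) in nhds (v₀, w₀), yosida R V U lam p.1 p.2 < y := by
      intro y hy
      have hy' : sInf (ySet R V U lam v₀ w₀) < y := hy
      obtain ⟨s, hsmem, hslt⟩ := exists_lt_of_csInf_lt (hSne v₀ w₀) hy'
      obtain ⟨η₀, hη₀, rfl⟩ := hsmem
      have hφcont : Continuous fun p : X × (X →L[ℝ] ℝ) =>
          pVreal R V p.1 η₀ + lam * Real.sqrt (U p.1 p.1)
            * Real.sqrt ((p.2 - η₀) (U.symm (p.2 - η₀))) := by
        simp only [pVreal]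
        refine Continuous.add (Continuous.add (hRcont.comp continuous_fst)
          ((hacont.comp continuous_fst).mul continuous_const)) ?_
        exact (continuous_const.mul (hucont.comp continuous_fst)).mul
          (hNcont.comp (continuous_snd.sub continuous_const))
      have hev := (tendsto_order.1 (hφcont.continuousAt (x := (v₀, w₀)))).2 y hslt
      filter_upwards [hev] with p hp
      exact lt_of_le_of_lt (hyle p.1 p.2 η₀ hη₀) hp
    exact tendsto_order.2 ⟨hlow, hhigh⟩
  exact ⟨hcont, hhom, hconv, hyge, hup, hlip⟩
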